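/- Given a set of working individuals sorted in ascending order of their failure times, there exists an optimal maintenance schedule in which the actual replacement times follow the same order: if individual A fails before individual B, then A is replaced no later than B. -/
import Mathlib


open Finset

/-- Feasibility of a replacement schedule `τ`: every individual is replaced at some period in
`{1,…}` no later than its failure time. -/
def Feasible {ι : Type*} (f : ι → ℕ) (τ : ι → ℕ) : Prop :=
  ∀ i, 1 ≤ τ i ∧ τ i ≤ f i

/-- Total maintenance cost of schedule `τ`: corrective cost at the failure time, preventive
cost strictly earlier, plus one setup cost `d` per distinct replacement time used. -/
noncomputable def totalCost {ι : Type*} [Fintype ι] [DecidableEq ι] (f : ι → ℕ)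
    (cpr ccr : ι → ℝ) (d : ℝ) (τ : ι → ℕ) : ℝ :=
  (∑ i, if τ i = f i then ccr i else cpr i) + d * ((Finset.univ.image τ).card : ℝ)

/-- Theorem 2: there exists an optimal schedule whose actual replacement times follow the
order of the failure times: if individual `i` fails before individual `j`, then `i` is
replaced no later than `j`. -/
theorem exists_optimal_order_preserving
    {ι : Type*} [Fintype ι] [DecidableEq ι] [Nonempty ι]
    (f : ι → ℕ) (cpr ccr : ι → ℝ) (d : ℝ)
    (hf : ∀ i, 1 ≤ f i) (hc : ∀ i, cpr i < ccr i) (hd : 0 < d) :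
    ∃ τ : ι → ℕ, Feasible f τ ∧
      (∀ σ : ι → ℕ, Feasible f σ → totalCost f cpr ccr d τ ≤ totalCost f cpr ccr d σ) ∧
      ∀ i j, f i < f j → τ i ≤ τ j := by
  classical
  set S := Fintype.piFinset (fun i : ι => Finset.Icc 1 (f i)) with hS
  have hmem : ∀ τ : ι → ℕ, τ ∈ S ↔ Feasible f τ := by
    intro τ
    simp [hS, Fintype.mem_piFinset, Finset.mem_Icc, Feasible]
  have hne : S.Nonempty := ⟨f, (hmem f).2 fun i => ⟨hf i, le_rfl⟩⟩
  obtain ⟨σ, hσS, hσmin⟩ := S.exists_min_image (totalCost f cpr ccr d) hne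
  have hσfeas : Feasible f σ := (hmem σ).1 hσS
  have hs : ∀ i : ι, (Finset.univ.filter (fun j => f i ≤ f j)).Nonempty :=
    fun i => ⟨i, by simp⟩
  set τ : ι → ℕ := fun i => (Finset.univ.filter (fun j => f i ≤ f j)).inf' (hs i) σ with hτ
  have hle : ∀ i, τ i ≤ σ i := fun i => Finset.inf'_le σ (by simp)
  have hex : ∀ i, ∃ k, τ i = σ k := by
    intro i
    obtain ⟨k, hk, hk2⟩ := Finset.exists_mem_eq_inf' (hs i) σ
    exact ⟨k, hk2⟩
  have hτfeas : Feasible f τ := by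
    intro i
    refine ⟨Finset.le_inf' _ _ fun j hj => (hσfeas j).1, (hle i).trans (hσfeas i).2⟩
  have hcost : totalCost f cpr ccr d τ ≤ totalCost f cpr ccr d σ := by
    unfold totalCost
    apply add_le_add
    · apply Finset.sum_le_sum
      intro i _
      by_cases h : τ i = f i
      · have hσi : σ i = f i := le_antisymm (hσfeas i).2 (h ▸ hle i)
        simp [h, hσi]
      · by_cases h2 : σ i = f i
        · simp [h, h2, (hc i).le]
        · simp [h, h2]
    · apply mul_le_mul_of_nonneg_left _ hd.le
      have : (Finset.univ.image τ) ⊆ (Finset.univ.image σ) := by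
        intro x hx
        simp only [Finset.mem_image, Finset.mem_univ, true_and] at hx ⊢
        obtain ⟨i, hi⟩ := hx
        obtain ⟨k, hk⟩ := hex i
        exact ⟨k, by rw [← hk, hi]⟩
      exact_mod_cast Finset.card_le_card this
  refine ⟨τ, hτfeas, ?_, ?_⟩
  · intro σ' hσ'
    exact hcost.trans (hσmin σ' ((hmem σ').2 hσ'))
  · intro i j hij
    obtain ⟨k, hk, hk2⟩ := Finset.exists_mem_eq_inf' (hs j) σ
    have hτj : τ j = σ k := hk2
    rw [hτj]
    apply Finset.inf'_le
    simp only [Finset.mem_filter, Finset.mem_univ, true_and] at hk ⊢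
    exact hij.le.trans hk
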